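/- Let φ : ℝ → ℝ be differentiable with φ(s) - s * φ'(s) ≠ 0 for all s in an open interval U containing some point, define Q(s) := φ'(s) / (φ(s) - s * φ'(s)). If there is a nonzero constant c with φ(s) - s * φ'(s) = c * (Q(s) - s * Q'(s)) for all s ∈ U, and Q is differentiable on U, then there exist constants c₁ ≠ 0 and c₂ such that Q(s) = c₁ * φ(s) + c₂ * s for all s ∈ U. -/

import Mathlib

theorem stmt_2 (A B : ℝ) (hAB : A < B) (U : Set ℝ) (hU : U = Set.Ioo A B)
    (h0 : (0 : ℝ) ∉ U)
    (φ φ' Q Q' : ℝ → ℝ)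
    (hφd : ∀ s ∈ U, HasDerivAt φ (φ' s) s)
    (hQd : ∀ s ∈ U, HasDerivAt Q (Q' s) s)
    (hne : ∀ s ∈ U, φ s - s * φ' s ≠ 0)
    (hQ : ∀ s ∈ U, Q s = φ' s / (φ s - s * φ' s))
    (c : ℝ) (hc : c ≠ 0)
    (heq : ∀ s ∈ U, φ s - s * φ' s = c * (Q s - s * Q' s)) :
    ∃ c₁ c₂ : ℝ, c₁ ≠ 0 ∧ ∀ s ∈ U, Q s = c₁ * φ s + c₂ * s := by
  have hUopen : IsOpen U := hU ▸ isOpen_Ioo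
  have hUconv : Convex ℝ U := hU ▸ convex_Ioo A B
  have hsne : ∀ s ∈ U, s ≠ 0 := by
    intro s hs hs0; exact h0 (hs0 ▸ hs)
  set h : ℝ → ℝ := fun s => Q s / s - (1 / c) * (φ s / s) with hh
  have hd : ∀ s ∈ U, HasDerivAt h 0 s := by
    intro s hs
    have hs0 := hsne s hs
    have h1 : HasDerivAt (fun s => Q s / s) ((Q' s * s - Q s * 1) / s ^ 2) s :=
      (hQd s hs).div (hasDerivAt_id s) hs0
    have h2 : HasDerivAt (fun s => φ s / s) ((φ' s * s - φ s * 1) / s ^ 2) s :=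
      (hφd s hs).div (hasDerivAt_id s) hs0
    have h3 := h1.sub (h2.const_mul (1 / c))
    refine HasDerivAt.congr_deriv (f := h) h3 ?_
    have he := heq s hs
    field_simp
    nlinarith [he, sq_nonneg s]
  have hdiff : DifferentiableOn ℝ h U := fun s hs => ((hd s hs).differentiableAt).differentiableWithinAt
  have hfd : ∀ s ∈ U, fderivWithin ℝ h U s = 0 := by
    intro s hs
    rw [fderivWithin_eq_fderiv (hUopen.uniqueDiffOn s hs) (hd s hs).differentiableAt]
    rw [(hd s hs).hasFDerivAt.fderiv]
    ext x; simp
  have hs₀ : (A + B) / 2 ∈ U := by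
    rw [hU]; constructor <;> [linarith; linarith]
  refine ⟨1 / c, h ((A + B) / 2), one_div_ne_zero hc, fun s hs => ?_⟩
  have hconst : h s = h ((A + B) / 2) :=
    hUconv.is_const_of_fderivWithin_eq_zero hdiff hfd hs hs₀
  have hs0 := hsne s hs
  set d := h ((A + B) / 2) with hd2
  have h1 : Q s / s = (1 / c) * (φ s / s) + d := by
    have : Q s / s - (1 / c) * (φ s / s) = d := hconst
    linarith
  calc Q s = (Q s / s) * s := (div_mul_cancel₀ _ hs0).symm
    _ = ((1 / c) * (φ s / s) + d) * s := by rw [h1]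
    _ = 1 / c * φ s + d * s := by field_simp
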